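/- Let w : ℝ → ℝ be absolutely continuous with derivative w' ∈ L²(ℝ), and let X, Z, Z̄ be real random variables with E[X²] < ∞, where X is such that E[X w(x - Z)] = E[X (w(x - Z) - w(x - Z̄))] for all x. Then ∫ (E[X w(x - Z)])² dx ≤ E[X²] · ‖w'‖₂² · E[(Z - Z̄)²]. -/

import Mathlib

open MeasureTheory
open scoped ENNReal

private lemma ofReal_sq_eq' (r : ℝ) :
    (‖r‖₊ : ℝ≥0∞) ^ (2 : ℝ) = ENNReal.ofReal (r ^ 2) := by
  rw [show (2:ℝ) = ((2:ℕ):ℝ) by norm_num, ENNReal.rpow_natCast,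
    show r ^ 2 = ‖r‖ ^ 2 by rw [Real.norm_eq_abs, sq_abs],
    ENNReal.ofReal_pow (norm_nonneg r), ofReal_norm, enorm_eq_nnnorm]

/-- An `ℝ≥0∞`-valued Cauchy–Schwarz inequality for Bochner integrals, valid without
integrability assumptions. -/
private lemma sq_integral_mul_le {α : Type*} [MeasurableSpace α] (ν : Measure α)
    (f g : α → ℝ) (hf : AEMeasurable f ν) (hg : AEMeasurable g ν) :
    ENNReal.ofReal ((∫ a, f a * g a ∂ν) ^ 2) ≤
      (∫⁻ a, ENNReal.ofReal (f a ^ 2) ∂ν) * (∫⁻ a, ENNReal.ofReal (g a ^ 2) ∂ν) := by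
  have h1 : ENNReal.ofReal ((∫ a, f a * g a ∂ν) ^ 2)
      = (‖∫ a, f a * g a ∂ν‖₊ : ℝ≥0∞) ^ 2 := by
    rw [show ((∫ a, f a * g a ∂ν) ^ 2) = ‖∫ a, f a * g a ∂ν‖ ^ 2 by
        rw [Real.norm_eq_abs, sq_abs],
      ENNReal.ofReal_pow (norm_nonneg _), ofReal_norm, enorm_eq_nnnorm]
  have h2 : (‖∫ a, f a * g a ∂ν‖₊ : ℝ≥0∞) ≤ ∫⁻ a, ‖f a * g a‖₊ ∂ν :=
    enorm_integral_le_lintegral_enorm _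
  have h3 : (∫⁻ a, (‖f a * g a‖₊ : ℝ≥0∞) ∂ν) ≤
      (∫⁻ a, (‖f a‖₊ : ℝ≥0∞) ^ (2:ℝ) ∂ν) ^ (1/(2:ℝ)) *
      (∫⁻ a, (‖g a‖₊ : ℝ≥0∞) ^ (2:ℝ) ∂ν) ^ (1/(2:ℝ)) := by
    have hconj : Real.HolderConjugate 2 2 := by
      rw [Real.holderConjugate_iff]; constructor <;> norm_num
    have := ENNReal.lintegral_mul_le_Lp_mul_Lq ν hconj
      (f := fun a => (‖f a‖₊ : ℝ≥0∞)) (g := fun a => (‖g a‖₊ : ℝ≥0∞))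
      hf.enorm hg.enorm
    simpa [nnnorm_mul, ENNReal.coe_mul] using this
  calc ENNReal.ofReal ((∫ a, f a * g a ∂ν) ^ 2)
      = (‖∫ a, f a * g a ∂ν‖₊ : ℝ≥0∞) ^ 2 := h1
    _ ≤ (∫⁻ a, (‖f a * g a‖₊ : ℝ≥0∞) ∂ν) ^ 2 := by gcongr
    _ ≤ ((∫⁻ a, (‖f a‖₊ : ℝ≥0∞) ^ (2:ℝ) ∂ν) ^ (1/(2:ℝ)) *
        (∫⁻ a, (‖g a‖₊ : ℝ≥0∞) ^ (2:ℝ) ∂ν) ^ (1/(2:ℝ))) ^ 2 := by gcongr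
    _ = (∫⁻ a, (‖f a‖₊ : ℝ≥0∞) ^ (2:ℝ) ∂ν) * (∫⁻ a, (‖g a‖₊ : ℝ≥0∞) ^ (2:ℝ) ∂ν) := by
        rw [mul_pow, ← ENNReal.rpow_natCast (_ ^ (1/(2:ℝ))) 2,
          ← ENNReal.rpow_natCast ((∫⁻ a, (‖g a‖₊ : ℝ≥0∞) ^ (2:ℝ) ∂ν) ^ (1/(2:ℝ))) 2,
          ← ENNReal.rpow_mul, ← ENNReal.rpow_mul]
        norm_num
    _ = (∫⁻ a, ENNReal.ofReal (f a ^ 2) ∂ν) * (∫⁻ a, ENNReal.ofReal (g a ^ 2) ∂ν) := by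
        simp_rw [ofReal_sq_eq']

private lemma lintegral_ofReal_sq {α : Type*} [MeasurableSpace α] (ν : Measure α)
    (f : α → ℝ) :
    (∫⁻ a, ENNReal.ofReal (f a ^ 2) ∂ν) = eLpNorm f 2 ν ^ 2 := by
  have h : (∫⁻ a, ENNReal.ofReal (f a ^ 2) ∂ν) = ∫⁻ a, (‖f a‖₊ : ℝ≥0∞) ^ (2:ℝ) ∂ν := by
    simp_rw [ofReal_sq_eq']
  rw [h, eLpNorm_eq_lintegral_rpow_enorm_toReal two_ne_zero ENNReal.ofNat_ne_top,
    ← ENNReal.rpow_natCast (_ ^ _) 2, ← ENNReal.rpow_mul]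
  norm_num
  rfl

/-- The `L²`-Lipschitz bound for translations of an absolutely continuous function. -/
private lemma shift_sq_lintegral_le (w g : ℝ → ℝ) (hg : Measurable g)
    (hAC : ∀ x t : ℝ, w (x + t) - w x = t * ∫ s in (0:ℝ)..1, g (x + s * t)) (t : ℝ) :
    (∫⁻ y, ENNReal.ofReal ((w (y + t) - w y) ^ 2)) ≤
      ENNReal.ofReal (t ^ 2) * ∫⁻ y, ENNReal.ofReal (g y ^ 2) := by
  have key : ∀ y : ℝ, ENNReal.ofReal ((w (y + t) - w y) ^ 2) ≤
      ENNReal.ofReal (t ^ 2) *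
        ∫⁻ s in Set.Ioc (0:ℝ) 1, ENNReal.ofReal (g (y + s * t) ^ 2) := by
    intro y
    rw [hAC y t, mul_pow, ENNReal.ofReal_mul (sq_nonneg t)]
    gcongr
    have hint : (∫ s in (0:ℝ)..1, g (y + s * t)) =
        ∫ s in Set.Ioc (0:ℝ) 1, (fun s => g (y + s * t)) s * (fun _ : ℝ => (1:ℝ)) s ∂volume := by
      rw [intervalIntegral.integral_of_le zero_le_one]
      simp
    rw [hint]
    have hmeas : AEMeasurable (fun s : ℝ => g (y + s * t))
        (volume.restrict (Set.Ioc (0:ℝ) 1)) :=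
      (hg.comp (measurable_const.add (measurable_id.mul_const t))).aemeasurable
    refine (sq_integral_mul_le _ _ _ hmeas aemeasurable_const).trans ?_
    have hone : (∫⁻ _ : ℝ, ENNReal.ofReal ((1:ℝ) ^ 2) ∂(volume.restrict (Set.Ioc (0:ℝ) 1)))
        = 1 := by
      simp [Real.volume_Ioc]
    rw [hone, mul_one]
  calc (∫⁻ y, ENNReal.ofReal ((w (y + t) - w y) ^ 2))
      ≤ ∫⁻ y, ENNReal.ofReal (t ^ 2) *
          ∫⁻ s in Set.Ioc (0:ℝ) 1, ENNReal.ofReal (g (y + s * t) ^ 2) := lintegral_mono key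
    _ = ENNReal.ofReal (t ^ 2) *
          ∫⁻ y, ∫⁻ s in Set.Ioc (0:ℝ) 1, ENNReal.ofReal (g (y + s * t) ^ 2) :=
        lintegral_const_mul' _ _ ENNReal.ofReal_ne_top
    _ = ENNReal.ofReal (t ^ 2) *
          ∫⁻ s in Set.Ioc (0:ℝ) 1, ∫⁻ y, ENNReal.ofReal (g (y + s * t) ^ 2) := by
        rw [lintegral_lintegral_swap]
        exact (ENNReal.measurable_ofReal.comp ((hg.comp
          (measurable_fst.add (measurable_snd.mul_const t))).pow_const 2)).aemeasurable
    _ = ENNReal.ofReal (t ^ 2) *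
          ∫⁻ s in Set.Ioc (0:ℝ) 1, ∫⁻ y, ENNReal.ofReal (g y ^ 2) := by
        congr 1
        refine lintegral_congr fun s => ?_
        exact lintegral_add_right_eq_self (fun u => ENNReal.ofReal (g u ^ 2)) (s * t)
    _ = ENNReal.ofReal (t ^ 2) * ∫⁻ y, ENNReal.ofReal (g y ^ 2) := by
        rw [lintegral_const, Measure.restrict_apply_univ, Real.volume_Ioc]
        norm_num

/-- key estimate of Lemma 6: if `w` is absolutely continuous with
derivative `w' ∈ L²`, `E[X²] < ∞` and `E[X w(x - Z)] = E[X(w(x - Z) - w(x - Z̄))]`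
for all `x`, then `∫ (E[X w(x - Z)])² dx ≤ E[X²] ‖w'‖₂² E[(Z - Z̄)²]`. -/
theorem centered_convolution_L2_bound
    {Ω : Type*} [MeasurableSpace Ω] (μ : Measure Ω) [IsProbabilityMeasure μ]
    (w w' : ℝ → ℝ) (hmw : Measurable w)
    (hAC : ∀ x t : ℝ, w (x + t) - w x = t * ∫ s in (0:ℝ)..1, w' (x + s * t))
    (hw' : MemLp w' 2 (volume : Measure ℝ))
    (X Z Z' : Ω → ℝ) (hX : MemLp X 2 μ) (hmX : Measurable X)
    (hmZ : Measurable Z) (hmZ' : Measurable Z')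
    (hZZ : MemLp (fun ω => Z ω - Z' ω) 2 μ)
    (hkey : ∀ x : ℝ, ∫ ω, X ω * w (x - Z ω) ∂μ =
      ∫ ω, X ω * (w (x - Z ω) - w (x - Z' ω)) ∂μ) :
    ∫ x, (∫ ω, X ω * w (x - Z ω) ∂μ) ^ 2 ≤
      (∫ ω, X ω ^ 2 ∂μ) * (eLpNorm w' 2 volume).toReal ^ 2 *
        ∫ ω, (Z ω - Z' ω) ^ 2 ∂μ := by
  classical
  -- replace w' by a measurable representative g
  obtain ⟨g, hgsm, hgae⟩ := hw'.aestronglyMeasurable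
  have hg : Measurable g := hgsm.measurable
  have hAC' : ∀ x t : ℝ, w (x + t) - w x = t * ∫ s in (0:ℝ)..1, g (x + s * t) := by
    intro x t
    rcases eq_or_ne t 0 with rfl | ht
    · simp
    · rw [hAC x t]
      congr 1
      refine intervalIntegral.integral_congr_ae ?_
      have hqmp : Measure.QuasiMeasurePreserving (fun s : ℝ => x + s * t)
          (volume : Measure ℝ) (volume : Measure ℝ) := by
        have h1 : Measure.QuasiMeasurePreserving (fun s : ℝ => s * t)
            (volume : Measure ℝ) (volume : Measure ℝ) :=
          ⟨measurable_mul_const t, by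
            rw [Real.map_volume_mul_right ht]
            exact Measure.smul_absolutelyContinuous⟩
        have h2 : Measure.QuasiMeasurePreserving (fun u : ℝ => x + u)
            (volume : Measure ℝ) (volume : Measure ℝ) :=
          (measurePreserving_add_left (volume : Measure ℝ) x).quasiMeasurePreserving
        exact h2.comp h1
      have hae : (fun s : ℝ => w' (x + s * t)) =ᵐ[volume] fun s : ℝ => g (x + s * t) :=
        hqmp.ae_eq hgae
      filter_upwards [hae] with s hs _ using hs
  -- notation
  set F : ℝ → ℝ := fun x => ∫ ω, X ω * w (x - Z ω) ∂μ with hF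
  set D : ℝ → Ω → ℝ := fun x ω => w (x - Z ω) - w (x - Z' ω) with hDdef
  set EX2 : ℝ≥0∞ := ∫⁻ ω, ENNReal.ofReal (X ω ^ 2) ∂μ with hEX2def
  set LZ : ℝ≥0∞ := ∫⁻ ω, ENNReal.ofReal ((Z ω - Z' ω) ^ 2) ∂μ with hLZdef
  set A : ℝ≥0∞ := ∫⁻ y, ENNReal.ofReal (g y ^ 2) with hAdef
  have hDm : ∀ x, Measurable (D x) := fun x =>
    (hmw.comp (measurable_const.sub hmZ)).sub (hmw.comp (measurable_const.sub hmZ'))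
  -- Step A: pointwise Cauchy-Schwarz
  have stepA : ∀ x : ℝ, ENNReal.ofReal (F x ^ 2) ≤
      EX2 * ∫⁻ ω, ENNReal.ofReal (D x ω ^ 2) ∂μ := by
    intro x
    have : F x = ∫ ω, X ω * D x ω ∂μ := hkey x
    rw [this]
    exact sq_integral_mul_le μ X (D x) hmX.aemeasurable (hDm x).aemeasurable
  -- per-ω bound using the shift lemma
  have perω : ∀ ω : Ω, (∫⁻ x, ENNReal.ofReal (D x ω ^ 2)) ≤
      ENNReal.ofReal ((Z ω - Z' ω) ^ 2) * A := by
    intro ω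
    have h1 : (fun x => ENNReal.ofReal (D x ω ^ 2)) = fun x =>
        (fun u => ENNReal.ofReal ((w (u + (Z' ω - Z ω)) - w u) ^ 2)) (x + -(Z' ω)) := by
      funext x
      simp only [hDdef]
      rw [show x + -Z' ω + (Z' ω - Z ω) = x - Z ω by ring,
        show x + -Z' ω = x - Z' ω by ring]
    rw [h1, lintegral_add_right_eq_self
      (fun u => ENNReal.ofReal ((w (u + (Z' ω - Z ω)) - w u) ^ 2)) (-(Z' ω))]
    have := shift_sq_lintegral_le w g hg hAC' (Z' ω - Z ω)
    rwa [show (Z' ω - Z ω) ^ 2 = (Z ω - Z' ω) ^ 2 by ring] at this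
  -- finiteness
  have hEX2 : EX2 = eLpNorm X 2 μ ^ 2 := lintegral_ofReal_sq μ X
  have hLZ : LZ = eLpNorm (fun ω => Z ω - Z' ω) 2 μ ^ 2 :=
    lintegral_ofReal_sq μ _
  have hA : A = eLpNorm w' 2 volume ^ 2 := by
    rw [hAdef, lintegral_ofReal_sq, eLpNorm_congr_ae hgae.symm]
  have hEX2fin : EX2 ≠ ⊤ := by rw [hEX2]; exact ENNReal.pow_ne_top hX.2.ne
  have hLZfin : LZ ≠ ⊤ := by rw [hLZ]; exact ENNReal.pow_ne_top hZZ.2.ne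
  have hAfin : A ≠ ⊤ := by rw [hA]; exact ENNReal.pow_ne_top hw'.2.ne
  -- main chain in ℝ≥0∞
  have chain : (∫⁻ x, ENNReal.ofReal (F x ^ 2)) ≤ EX2 * (LZ * A) := by
    have hmeasD : AEMeasurable (Function.uncurry fun (x : ℝ) (ω : Ω) =>
        ENNReal.ofReal (D x ω ^ 2)) ((volume : Measure ℝ).prod μ) := by
      apply Measurable.aemeasurable
      apply ENNReal.measurable_ofReal.comp
      exact (((hmw.comp (measurable_fst.sub (hmZ.comp measurable_snd))).sub
        (hmw.comp (measurable_fst.sub (hmZ'.comp measurable_snd)))).pow_const 2)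
    calc (∫⁻ x, ENNReal.ofReal (F x ^ 2))
        ≤ ∫⁻ x, EX2 * ∫⁻ ω, ENNReal.ofReal (D x ω ^ 2) ∂μ := lintegral_mono stepA
      _ = EX2 * ∫⁻ x, ∫⁻ ω, ENNReal.ofReal (D x ω ^ 2) ∂μ :=
          lintegral_const_mul' _ _ hEX2fin
      _ = EX2 * ∫⁻ ω, (∫⁻ x, ENNReal.ofReal (D x ω ^ 2)) ∂μ := by
          rw [lintegral_lintegral_swap hmeasD]
      _ ≤ EX2 * ∫⁻ ω, ENNReal.ofReal ((Z ω - Z' ω) ^ 2) * A ∂μ := by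
          gcongr with ω
          exact perω ω
      _ = EX2 * (LZ * A) := by rw [lintegral_mul_const' _ _ hAfin]
  -- measurability of F
  have hFsm : StronglyMeasurable F := by
    have hDmeas : Measurable fun p : ℝ × Ω => X p.2 * w (p.1 - Z p.2) :=
      (hmX.comp measurable_snd).mul (hmw.comp (measurable_fst.sub (hmZ.comp measurable_snd)))
    exact hDmeas.stronglyMeasurable.integral_prod_right'
  -- convert everything back to real integrals
  have hFint : ∫ x, F x ^ 2 = (∫⁻ x, ENNReal.ofReal (F x ^ 2)).toReal := by
    rw [integral_eq_lintegral_of_nonneg_ae (ae_of_all _ fun x => sq_nonneg (F x))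
      ((hFsm.measurable.pow_const 2).aestronglyMeasurable)]
  have hXint : ∫ ω, X ω ^ 2 ∂μ = EX2.toReal := by
    rw [hEX2def, integral_eq_lintegral_of_nonneg_ae (ae_of_all _ fun ω => sq_nonneg (X ω))
      ((hmX.pow_const 2).aestronglyMeasurable)]
  have hZint : ∫ ω, (Z ω - Z' ω) ^ 2 ∂μ = LZ.toReal := by
    rw [hLZdef, integral_eq_lintegral_of_nonneg_ae (f := fun ω => (Z ω - Z' ω) ^ 2) (ae_of_all _ fun ω => sq_nonneg _)
      (((hmZ.sub hmZ').pow_const 2 : Measurable fun ω => (Z ω - Z' ω) ^ 2).aestronglyMeasurable)]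
  have hwnorm : (eLpNorm w' 2 volume).toReal ^ 2 = A.toReal := by
    rw [hA, ENNReal.toReal_pow]
  rw [hFint, hXint, hZint, hwnorm]
  have hfin : EX2 * (LZ * A) ≠ ⊤ :=
    ENNReal.mul_ne_top hEX2fin (ENNReal.mul_ne_top hLZfin hAfin)
  calc (∫⁻ x, ENNReal.ofReal (F x ^ 2)).toReal
      ≤ (EX2 * (LZ * A)).toReal := ENNReal.toReal_mono hfin chain
    _ = EX2.toReal * A.toReal * LZ.toReal := by
        rw [ENNReal.toReal_mul, ENNReal.toReal_mul]; ring
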